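/- Let φ be a structural set in ℝ_{0,m}. For every a ∈ ℝ_{0,m} and every j = 1,...,m, one has φʲ [Ψ₊^{φ,φ}(a)] φʲ = Ψ₋^{φ,φ}(a). -/

import Mathlib

open CliffordAlgebra

noncomputable section

/-- The quadratic form of `ℝ_{0,m}`: negative definite on `ℝ^m`. -/
abbrev Qf (m : ℕ) : QuadraticForm ℝ (Fin m → ℝ) :=
  QuadraticMap.weightedSumSquares ℝ (fun _ : Fin m => (-1 : ℝ))

/-- The real Clifford algebra `ℝ_{0,m}`. -/
abbrev Cl (m : ℕ) := CliffordAlgebra (Qf m)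

/-- A structural set: an orthonormal basis `ψ¹,…,ψᵐ` of `ℝᵐ`. -/
def IsStructuralSet {m : ℕ} (ψ : Fin m → (Fin m → ℝ)) : Prop :=
  ∀ i j, (∑ t, ψ i t * ψ j t) = if i = j then (1 : ℝ) else 0

/-- The ordered product `ψ_A = ψ^{j₁} ⋯ ψ^{j_k}` for `A = {j₁ < ⋯ < j_k}`. -/
def prodS {m : ℕ} (ψ : Fin m → (Fin m → ℝ)) (A : Finset (Fin m)) : Cl m :=
  ((A.sort (· ≤ ·)).map (fun i => ι (Qf m) (ψ i))).prod

/-- The operator `Ψ_k^{φ,ψ}(a) = Σ_{|A|=k} φ_A a ψ̂_A`. -/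
def PsiK {m : ℕ} (φ ψ : Fin m → (Fin m → ℝ)) (k : ℕ) (a : Cl m) : Cl m :=
  ∑ A ∈ Finset.univ.filter (fun A : Finset (Fin m) => A.card = k),
    prodS φ A * a * reverse (prodS ψ A)

/-- `Ψ₊ = Σ_{k even} Ψ_k`. -/
def PsiPlus {m : ℕ} (φ ψ : Fin m → (Fin m → ℝ)) (a : Cl m) : Cl m :=
  ∑ k ∈ (Finset.range (m + 1)).filter (fun k => Even k), PsiK φ ψ k a

/-- `Ψ₋ = Σ_{k odd} Ψ_k`. -/
def PsiMinus {m : ℕ} (φ ψ : Fin m → (Fin m → ℝ)) (a : Cl m) : Cl m :=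
  ∑ k ∈ (Finset.range (m + 1)).filter (fun k => Odd k), PsiK φ ψ k a

/-- `Ψ₁^{φ,ψ}(a) = Σⱼ φʲ a ψʲ`. -/
def Psi1 {m : ℕ} (φ ψ : Fin m → (Fin m → ℝ)) (a : Cl m) : Cl m :=
  ∑ j, ι (Qf m) (φ j) * a * ι (Qf m) (ψ j)

/-- The standard basis of `ℝᵐ`. -/
def stdB {m : ℕ} (i : Fin m) : Fin m → ℝ := Pi.single i 1

/-- The basis multivector `e_A`. -/
def eA {m : ℕ} (A : Finset (Fin m)) : Cl m := prodS stdB A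

/-- The element with coefficients `c` in the multivector basis. -/
def toCl {m : ℕ} (c : Finset (Fin m) → ℝ) : Cl m := ∑ A, c A • eA A

/-- The space `ℝ_{0,m}^{(k)}` of `k`-grade multivectors. -/
def gradeK (m k : ℕ) : Submodule ℝ (Cl m) :=
  Submodule.span ℝ {x | ∃ A : Finset (Fin m), A.card = k ∧ x = eA A}

/-- Coefficient functions of `ℝ_{0,m}`-valued maps. -/
abbrev Coef (m : ℕ) := Finset (Fin m) → ℝ

/-- The coefficients of the even part `f₊`. -/
def cEven {m : ℕ} (c : Coef m) : Coef m := fun A => if Even A.card then c A else 0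

/-- The coefficients of the odd part `f₋`. -/
def cOdd {m : ℕ} (c : Coef m) : Coef m := fun A => if Odd A.card then c A else 0

/-- The even part of a Clifford number. -/
def evenPart {m : ℕ} (a : Cl m) : Cl m :=
  (DirectSum.decompose (evenOdd (Qf m)) a 0 : evenOdd (Qf m) 0)

/-- The odd part of a Clifford number. -/
def oddPart {m : ℕ} (a : Cl m) : Cl m :=
  (DirectSum.decompose (evenOdd (Qf m)) a 1 : evenOdd (Qf m) 1)

/-- Partial derivative `∂F/∂xᵢ` of a coefficient function. -/
def pd {m : ℕ} (i : Fin m) (F : (Fin m → ℝ) → Coef m) : (Fin m → ℝ) → Coef m :=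
  fun x => fderiv ℝ F x (Pi.single i 1)

/-- The sandwich operator `φ∂[f]ψ∂ = Σᵢⱼ φⁱ (∂²f/∂xᵢ∂xⱼ) ψʲ` for `f = Σ_A F_A e_A`. -/
def sandwichD {m : ℕ} (φ ψ : Fin m → (Fin m → ℝ)) (F : (Fin m → ℝ) → Coef m)
    (x : Fin m → ℝ) : Cl m :=
  ∑ i, ∑ j, ι (Qf m) (φ i) * toCl (pd i (pd j F) x) * ι (Qf m) (ψ j)

/-- The operator `φ∂[ψ∂[f]] = Σᵢⱼ φⁱ ψʲ ∂²f/∂xᵢ∂xⱼ`. -/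
def ddD {m : ℕ} (φ ψ : Fin m → (Fin m → ℝ)) (F : (Fin m → ℝ) → Coef m)
    (x : Fin m → ℝ) : Cl m :=
  ∑ i, ∑ j, ι (Qf m) (φ i) * (ι (Qf m) (ψ j) * toCl (pd i (pd j F) x))

/-- The componentwise Laplacian `Δf = Σᵢ ∂²f/∂xᵢ²`. -/
def lapD {m : ℕ} (F : (Fin m → ℝ) → Coef m) (x : Fin m → ℝ) : Cl m :=
  ∑ i, toCl (pd i (pd i F) x)

namespace StructAux

variable {m : ℕ}

lemma Qf_phi {φ : Fin m → Fin m → ℝ} (hφ : IsStructuralSet φ) (i : Fin m) :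
    Qf m (φ i) = -1 := by
  have h := hφ i i
  rw [if_pos rfl] at h
  rw [QuadraticMap.weightedSumSquares_apply]
  simp only [smul_eq_mul, neg_one_mul, Finset.sum_neg_distrib, h]

lemma polar_phi {φ : Fin m → Fin m → ℝ} (hφ : IsStructuralSet φ) {i j : Fin m}
    (hij : i ≠ j) : QuadraticMap.polar (Qf m) (φ i) (φ j) = 0 := by
  have h := hφ i j
  rw [if_neg hij] at h
  simp only [QuadraticMap.polar, QuadraticMap.weightedSumSquares_apply, Pi.add_apply,
    smul_eq_mul, neg_one_mul]
  rw [← Finset.sum_sub_distrib, ← Finset.sum_sub_distrib]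
  have key : ∀ t, -((φ i t + φ j t) * (φ i t + φ j t)) - -(φ i t * φ i t) -
      -(φ j t * φ j t) = -2 * (φ i t * φ j t) := fun t => by ring
  rw [Finset.sum_congr rfl (fun t _ => key t), ← Finset.mul_sum, h, mul_zero]

lemma e_sq {φ : Fin m → Fin m → ℝ} (hφ : IsStructuralSet φ) (i : Fin m) :
    ι (Qf m) (φ i) * ι (Qf m) (φ i) = -1 := by
  rw [ι_sq_scalar, Qf_phi hφ, map_neg, map_one]

lemma e_anti {φ : Fin m → Fin m → ℝ} (hφ : IsStructuralSet φ) {i j : Fin m}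
    (hij : i ≠ j) :
    ι (Qf m) (φ i) * ι (Qf m) (φ j) = -(ι (Qf m) (φ j) * ι (Qf m) (φ i)) := by
  rw [ι_mul_ι_comm, polar_phi hφ hij, map_zero, zero_sub]

lemma list_move {φ : Fin m → Fin m → ℝ} (hφ : IsStructuralSet φ) (j : Fin m) :
    ∀ l : List (Fin m), l.Pairwise (· < ·) →
    ∃ ε : ℝ, ε * ε = 1 ∧
      ι (Qf m) (φ j) * (l.map (fun i => ι (Qf m) (φ i))).prod
        = ε • (((if j ∈ l then l.erase j else List.orderedInsert (· ≤ ·) j l).map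
            (fun i => ι (Qf m) (φ i))).prod) := by
  intro l hl
  induction l with
  | nil =>
    refine ⟨1, by norm_num, ?_⟩
    simp [List.orderedInsert]
  | cons i t ih =>
    have hsort_t : t.Pairwise (· < ·) := hl.of_cons
    have hlt : ∀ b ∈ t, i < b := (List.pairwise_cons.mp hl).1
    by_cases hji : j = i
    · subst hji
      refine ⟨-1, by norm_num, ?_⟩
      have hmem : j ∈ j :: t := List.mem_cons_self
      rw [if_pos hmem, List.erase_cons_head]
      rw [List.map_cons, List.prod_cons, ← mul_assoc, e_sq hφ]
      simp
    · rcases lt_or_gt_of_ne hji with hj_lt | hj_gt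
      · -- j < i : j goes to the front
        have hnotmem : j ∉ i :: t := by
          intro hmem
          rcases List.mem_cons.mp hmem with h | h
          · exact hji h
          · exact absurd (hlt j h) (by omega)
        refine ⟨1, by norm_num, ?_⟩
        rw [if_neg hnotmem, List.orderedInsert, if_pos hj_lt.le, one_smul]
        simp [List.prod_cons]
      · -- i < j : move past the head
        obtain ⟨ε, hε, heq⟩ := ih hsort_t
        refine ⟨-ε, by nlinarith, ?_⟩
        have hstep : ι (Qf m) (φ j) * ((i :: t).map (fun i => ι (Qf m) (φ i))).prod
            = -(ι (Qf m) (φ i) *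
                (ι (Qf m) (φ j) * (t.map (fun i => ι (Qf m) (φ i))).prod)) := by
          rw [List.map_cons, List.prod_cons, ← mul_assoc, e_anti hφ hji, neg_mul,
            mul_assoc]
        rw [hstep, heq]
        have hlist : (if j ∈ i :: t then (i :: t).erase j
            else List.orderedInsert (· ≤ ·) j (i :: t))
            = i :: (if j ∈ t then t.erase j else List.orderedInsert (· ≤ ·) j t) := by
          by_cases hjt : j ∈ t
          · rw [if_pos (List.mem_cons.mpr (Or.inr hjt)), if_pos hjt,
              List.erase_cons_tail]
            simp [Ne.symm hji]
          · have : j ∉ i :: t := by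
              intro hmem
              rcases List.mem_cons.mp hmem with h | h
              · exact hji h
              · exact hjt h
            rw [if_neg this, if_neg hjt, List.orderedInsert, if_neg (not_le.mpr hj_gt)]
        rw [hlist, List.map_cons, List.prod_cons, mul_smul_comm, neg_smul]

lemma sort_erase (A : Finset (Fin m)) (j : Fin m) :
    (A.sort (· ≤ ·)).erase j = (A.erase j).sort (· ≤ ·) := by
  have hperm : List.Perm ((A.sort (· ≤ ·)).erase j) ((A.erase j).sort (· ≤ ·)) := by
    rw [← Multiset.coe_eq_coe, ← Multiset.coe_erase, Finset.sort_eq, Finset.sort_eq,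
      Finset.erase_val]
  exact hperm.eq_of_pairwise'
    (List.Pairwise.sublist (List.erase_sublist (a := j) (l := A.sort (· ≤ ·))) (A.pairwise_sort (· ≤ ·)))
    (Finset.pairwise_sort _ _)

lemma sort_insert' (A : Finset (Fin m)) {j : Fin m} (hj : j ∉ A) :
    List.orderedInsert (· ≤ ·) j (A.sort (· ≤ ·)) = (insert j A).sort (· ≤ ·) := by
  have hperm : List.Perm (List.orderedInsert (· ≤ ·) j (A.sort (· ≤ ·)))
      ((insert j A).sort (· ≤ ·)) := by
    refine (List.perm_orderedInsert _ j _).trans ?_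
    rw [← Multiset.coe_eq_coe]
    show (j ::ₘ (A.sort (· ≤ ·) : Multiset (Fin m))) = _
    rw [Finset.sort_eq, Finset.sort_eq, Finset.insert_val_of_notMem hj]
  exact hperm.eq_of_pairwise'
    ((Finset.pairwise_sort _ _).orderedInsert j _) (Finset.pairwise_sort _ _)

lemma finset_move {φ : Fin m → Fin m → ℝ} (hφ : IsStructuralSet φ) (j : Fin m)
    (A : Finset (Fin m)) :
    ∃ ε : ℝ, ε * ε = 1 ∧
      ι (Qf m) (φ j) * prodS φ A
        = ε • prodS φ (if j ∈ A then A.erase j else insert j A) := by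
  obtain ⟨ε, hε, heq⟩ := list_move hφ j (A.sort (· ≤ ·)) (Finset.sortedLT_sort A).pairwise
  refine ⟨ε, hε, ?_⟩
  rw [prodS, heq]
  congr 2
  by_cases hj : j ∈ A
  · rw [if_pos ((Finset.mem_sort _).mpr hj), if_pos hj, sort_erase]
  · rw [if_neg (fun h => hj ((Finset.mem_sort _).mp h)), if_neg hj, sort_insert' A hj]

lemma psi_sum (φ ψ : Fin m → Fin m → ℝ) (a : Cl m) (p : ℕ → Prop) [DecidablePred p] :
    ∑ k ∈ (Finset.range (m + 1)).filter p, PsiK φ ψ k a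
      = ∑ A ∈ Finset.univ.filter (fun A : Finset (Fin m) => p A.card),
          prodS φ A * a * reverse (prodS ψ A) := by
  rw [← Finset.sum_fiberwise_of_maps_to (g := Finset.card)
      (t := (Finset.range (m + 1)).filter p) ?_]
  · apply Finset.sum_congr rfl
    intro k hk
    have hpk : p k := (Finset.mem_filter.mp hk).2
    rw [PsiK]
    refine Finset.sum_congr ?_ (fun _ _ => rfl)
    rw [Finset.filter_filter]
    refine Finset.filter_congr fun A _ => ?_
    constructor
    · exact fun h => ⟨h ▸ hpk, h⟩
    · exact fun h => h.2
  · intro A hA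
    simp only [Finset.mem_filter, Finset.mem_univ, true_and, Finset.mem_range] at hA ⊢
    refine ⟨Nat.lt_succ_of_le ?_, hA⟩
    calc A.card ≤ Finset.univ.card := Finset.card_le_card (Finset.subset_univ A)
      _ = m := by simp

end StructAux

open StructAux in
/-- for a structural set `φ`, `φʲ [Ψ₊^{φ,φ}(a)] φʲ = Ψ₋^{φ,φ}(a)`
for every `a ∈ ℝ_{0,m}` and every `j`. -/
theorem conj_psiPlus_eq_psiMinus {m : ℕ} (φ : Fin m → (Fin m → ℝ))
    (hφ : IsStructuralSet φ) (a : Cl m) (j : Fin m) :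
    ι (Qf m) (φ j) * PsiPlus φ φ a * ι (Qf m) (φ j) = PsiMinus φ φ a := by
  rw [PsiPlus, PsiMinus, psi_sum, psi_sum, Finset.mul_sum, Finset.sum_mul]
  refine Finset.sum_nbij' (i := fun A => if j ∈ A then A.erase j else insert j A)
    (j := fun A => if j ∈ A then A.erase j else insert j A) ?_ ?_ ?_ ?_ ?_
  · -- maps evens to odds
    intro A hA
    simp only [Finset.mem_filter, Finset.mem_univ, true_and] at hA ⊢
    by_cases hj : j ∈ A
    · rw [if_pos hj, Finset.card_erase_of_mem hj]
      have h1 : 1 ≤ A.card := Finset.card_pos.mpr ⟨j, hj⟩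
      rw [Nat.even_iff] at hA; rw [Nat.odd_iff]; omega
    · rw [if_neg hj, Finset.card_insert_of_notMem hj]
      rw [Nat.even_iff] at hA; rw [Nat.odd_iff]; omega
  · -- maps odds to evens
    intro A hA
    simp only [Finset.mem_filter, Finset.mem_univ, true_and] at hA ⊢
    by_cases hj : j ∈ A
    · rw [if_pos hj, Finset.card_erase_of_mem hj]
      have h1 : 1 ≤ A.card := Finset.card_pos.mpr ⟨j, hj⟩
      rw [Nat.odd_iff] at hA; rw [Nat.even_iff]; omega
    · rw [if_neg hj, Finset.card_insert_of_notMem hj]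
      rw [Nat.odd_iff] at hA; rw [Nat.even_iff]; omega
  · -- left inverse
    intro A _
    by_cases hj : j ∈ A
    · rw [if_pos hj, if_neg (Finset.notMem_erase j A), Finset.insert_erase hj]
    · rw [if_neg hj, if_pos (Finset.mem_insert_self j A), Finset.erase_insert hj]
  · -- right inverse
    intro A _
    by_cases hj : j ∈ A
    · rw [if_pos hj, if_neg (Finset.notMem_erase j A), Finset.insert_erase hj]
    · rw [if_neg hj, if_pos (Finset.mem_insert_self j A), Finset.erase_insert hj]
  · -- the terms agree
    intro A _
    obtain ⟨ε, hε, heq⟩ := finset_move hφ j A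
    set B := if j ∈ A then A.erase j else insert j A with hB
    have hrev : reverse (R := ℝ) (prodS φ A) * ι (Qf m) (φ j)
        = ε • reverse (R := ℝ) (prodS φ B) := by
      have h := congrArg (reverse (R := ℝ)) heq
      rw [reverse.map_mul, reverse_ι, map_smul] at h
      exact h
    calc ι (Qf m) (φ j) * (prodS φ A * a * reverse (prodS φ A)) * ι (Qf m) (φ j)
        = (ι (Qf m) (φ j) * prodS φ A) * a *
            (reverse (prodS φ A) * ι (Qf m) (φ j)) := by
          simp only [mul_assoc]
      _ = (ε • prodS φ B) * a * (ε • reverse (prodS φ B)) := by rw [heq, hrev]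
      _ = (ε * ε) • (prodS φ B * a * reverse (prodS φ B)) := by
          rw [smul_mul_assoc, smul_mul_assoc, mul_smul_comm, smul_smul]
      _ = prodS φ B * a * reverse (prodS φ B) := by rw [hε, one_smul]
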